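/- Fix integers r, d ≥ 1 and take p = 2, Legs = Fin 2 × Fin r × Bool. Let β be a fixed-point-free involution of Legs of dominant form: for every (i,x) ∈ Fin 2 × Fin r, either β(i,x,false) = (i,x,true) (a horizontal wire), or there exists (j,y) ≠ (i,x) with β(i,x,false) = (j,y,false) and β(i,x,true) = (j,y,true) (a symmetrical bump). Let B_in(β) := card {(i,x) | ∃ y ≠ x, β(i,x,false) = (i,y,false)} (this equals 2♭_in(β), twice the number of non-trespassing bumps, i.e. bumps joining legs with the same first coordinate). Then for every positive semidefinite ρ ∈ M_{d^r}(ℂ) with Tr ρ = 1, one has |f_β(ρ)|² ≤ d^{B_in(β)}. -/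

import Mathlib

open ComplexOrder

/-- A pairing of `X` is a fixed-point-free involution of `X`. -/
def IsPairing {X : Type*} (α : Equiv.Perm X) : Prop :=
  α * α = 1 ∧ ∀ x, α x ≠ x

/-- The value assigned to a leg `(i, x, s)`: `a i x` on a left leg (`s = false`),
`b i x` on a right leg (`s = true`). -/
def legVal {p r d : ℕ} (a b : Fin p → Fin r → Fin d) :
    Fin p × Fin r × Bool → Fin d :=
  fun z => if z.2.2 then b z.1 z.2.1 else a z.1 z.2.1

/-- The contraction `f_β(ρ) = Tr[ρ^{⊗p} M(β)]`: the sum over all index assignments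
compatible with the pairing `β` of the corresponding products of entries of `ρ`. -/
noncomputable def fBeta {p r d : ℕ} (β : Equiv.Perm (Fin p × Fin r × Bool))
    (ρ : Matrix (Fin r → Fin d) (Fin r → Fin d) ℂ) : ℂ :=
  ∑ a : Fin p → Fin r → Fin d, ∑ b : Fin p → Fin r → Fin d,
    (∏ i : Fin p, ρ (a i) (b i)) *
      (if ∀ z : Fin p × Fin r × Bool, legVal a b z = legVal a b (β z) then 1 else 0)

/-- `B_in(β) = 2♭_in(β)`: the number of left legs belonging to a non-trespassing bump,
i.e. paired by `β` to a left leg with the same first coordinate. -/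
def bigBin {r : ℕ} (β : Equiv.Perm (Fin 2 × Fin r × Bool)) : ℕ :=
  (Finset.univ.filter fun ix : Fin 2 × Fin r =>
    ∃ y : Fin r, y ≠ ix.2 ∧ β (ix.1, ix.2, false) = (ix.1, y, false)).card

namespace Stmt19Aux
open Finset
open scoped Matrix

/-! ### Indicator toolkit -/

noncomputable def eI (P : Prop) : ℂ := @ite ℂ P (Classical.propDecidable P) 1 0
noncomputable def eR (P : Prop) : ℝ := @ite ℝ P (Classical.propDecidable P) 1 0

lemma eI_of {P : Prop} (h : P) : eI P = 1 := by simp [eI, h]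
lemma eI_not {P : Prop} (h : ¬ P) : eI P = 0 := by simp [eI, h]
lemma eR_of {P : Prop} (h : P) : eR P = 1 := by simp [eR, h]
lemma eR_not {P : Prop} (h : ¬ P) : eR P = 0 := by simp [eR, h]
lemma eR_nonneg (P : Prop) : 0 ≤ eR P := by
  by_cases h : P
  · rw [eR_of h]; norm_num
  · rw [eR_not h]
lemma eR_le_one (P : Prop) : eR P ≤ 1 := by
  by_cases h : P
  · rw [eR_of h]
  · rw [eR_not h]; norm_num

lemma eI_ite {P : Prop} [Decidable P] : (if P then (1:ℂ) else 0) = eI P := by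
  by_cases h : P <;> simp [eI, h]

lemma eI_congr {P Q : Prop} (h : P ↔ Q) : eI P = eI Q := by
  by_cases hp : P
  · rw [eI_of hp, eI_of (h.mp hp)]
  · rw [eI_not hp, eI_not (fun hq => hp (h.mpr hq))]

lemma eI_mul (P Q : Prop) : eI P * eI Q = eI (P ∧ Q) := by
  by_cases hp : P <;> by_cases hq : Q <;>
    simp [eI_of, eI_not, hp, hq, eI_not (P := P ∧ Q), not_and_of_not_left, not_and_of_not_right]

lemma conj_eI (P : Prop) : (starRingEnd ℂ) (eI P) = eI P := by
  by_cases hp : P <;> simp [eI_of, eI_not, hp]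

lemma sum_eI {M : Type*} [Fintype M] (A B : M) :
    (∑ m : M, eI (A = m) * eI (B = m)) = eI (A = B) := by
  rw [Finset.sum_eq_single A (fun m _ hm => by rw [eI_not (fun h => hm h.symm), zero_mul])
    (fun h => absurd (mem_univ A) h)]
  rw [eI_of rfl, one_mul]
  exact eI_congr eq_comm

lemma sum_eR_eq_one {M : Type*} [Fintype M] (A : M) :
    (∑ m : M, eR (A = m)) = 1 := by
  rw [Finset.sum_eq_single A (fun m _ hm => eR_not (fun h => hm h.symm))
    (fun h => absurd (mem_univ A) h)]
  exact eR_of rfl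

/-! ### Cauchy–Schwarz toolkit -/

lemma cs_complex {M : Type*} [Fintype M] (u v : M → ℂ) :
    ‖∑ m : M, u m * v m‖ ^ 2 ≤
      (∑ m : M, ‖u m‖ ^ 2) * (∑ m : M, ‖v m‖ ^ 2) := by
  have h1 : ‖∑ m : M, u m * v m‖ ≤ ∑ m : M, ‖u m‖ * ‖v m‖ := by
    refine le_trans (norm_sum_le _ _) ?_
    exact le_of_eq (Finset.sum_congr rfl fun m _ => norm_mul _ _)
  calc ‖∑ m : M, u m * v m‖ ^ 2
      ≤ (∑ m : M, ‖u m‖ * ‖v m‖) ^ 2 := by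
        apply pow_le_pow_left₀ (norm_nonneg _) h1
    _ ≤ _ := Finset.sum_mul_sq_le_sq_mul_sq _ _ _

lemma cs_card {α : Type*} (S : Finset α) (x : α → ℂ) :
    ‖∑ u ∈ S, x u‖ ^ 2 ≤ S.card * ∑ u ∈ S, ‖x u‖ ^ 2 := by
  calc ‖∑ u ∈ S, x u‖ ^ 2 ≤ (∑ u ∈ S, ‖x u‖) ^ 2 := by
        apply pow_le_pow_left₀ (norm_nonneg _) (norm_sum_le _ _)
    _ ≤ _ := sq_sum_le_card_mul_sum_sq

lemma sum_filter_eI {α : Type*} [Fintype α] (P : α → Prop) [DecidablePred P] (f : α → ℂ) :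
    (∑ u : α, f u * eI (P u)) = ∑ u ∈ univ.filter P, f u := by
  rw [Finset.sum_filter]
  refine Finset.sum_congr rfl fun u _ => ?_
  by_cases h : P u <;> simp [eI, h]

lemma sum_filter_eR {α : Type*} [Fintype α] (P : α → Prop) [DecidablePred P] (f : α → ℝ) :
    (∑ u ∈ univ.filter P, f u) = ∑ u : α, f u * eR (P u) := by
  rw [Finset.sum_filter]
  refine Finset.sum_congr rfl fun u _ => ?_
  by_cases h : P u <;> simp [eR, h]

lemma decouple {X Y M : Type*} [Fintype X] [Fintype Y] [Fintype M]
    (F : X → ℂ) (G : Y → ℂ) (φ : X → M) (ψ : Y → M) :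
    (∑ x : X, ∑ y : Y, F x * G y * eI (φ x = ψ y)) =
      ∑ m : M, (∑ x : X, F x * eI (φ x = m)) * (∑ y : Y, G y * eI (ψ y = m)) := by
  symm
  calc (∑ m : M, (∑ x : X, F x * eI (φ x = m)) * (∑ y : Y, G y * eI (ψ y = m)))
      = ∑ m : M, ∑ x : X, ∑ y : Y, (F x * eI (φ x = m)) * (G y * eI (ψ y = m)) :=
        Finset.sum_congr rfl fun m _ => Finset.sum_mul_sum _ _ _ _
    _ = ∑ x : X, ∑ m : M, ∑ y : Y, (F x * eI (φ x = m)) * (G y * eI (ψ y = m)) :=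
        Finset.sum_comm
    _ = ∑ x : X, ∑ y : Y, ∑ m : M, (F x * eI (φ x = m)) * (G y * eI (ψ y = m)) :=
        Finset.sum_congr rfl fun x _ => Finset.sum_comm
    _ = ∑ x : X, ∑ y : Y, F x * G y * eI (φ x = ψ y) := by
        refine Finset.sum_congr rfl fun x _ => Finset.sum_congr rfl fun y _ => ?_
        rw [← sum_eI (M := M) (φ x) (ψ y), Finset.mul_sum]
        exact Finset.sum_congr rfl fun m _ => by ring

/-! ### Structure of a dominant pairing -/

variable {r : ℕ} (β : Equiv.Perm (Fin 2 × Fin r × Bool))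

def wireP (i : Fin 2) (x : Fin r) : Prop := β (i, x, false) = (i, x, true)
def pnn (i : Fin 2) (x : Fin r) : Fin r := (β (i, x, false)).2.1
def inBP (i : Fin 2) (x : Fin r) : Prop :=
  (β (i, x, false)).2.2 = false ∧ (β (i, x, false)).1 = i
def tresP (i : Fin 2) (x : Fin r) : Prop :=
  (β (i, x, false)).2.2 = false ∧ (β (i, x, false)).1 ≠ i

instance (i : Fin 2) (x : Fin r) : Decidable (wireP β i x) := by unfold wireP; infer_instance
instance (i : Fin 2) (x : Fin r) : Decidable (inBP β i x) := by unfold inBP; infer_instance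
instance (i : Fin 2) (x : Fin r) : Decidable (tresP β i x) := by unfold tresP; infer_instance

/-- The dominance hypothesis. -/
def Dom : Prop := ∀ (i : Fin 2) (x : Fin r),
      β (i, x, false) = (i, x, true) ∨
      ∃ (j : Fin 2) (y : Fin r), (j, y) ≠ (i, x) ∧
        β (i, x, false) = (j, y, false) ∧ β (i, x, true) = (j, y, true)

variable {β}

lemma beta_invol (hβ : IsPairing β) (z : Fin 2 × Fin r × Bool) : β (β z) = z := by
  have h := congrArg (fun σ : Equiv.Perm (Fin 2 × Fin r × Bool) => σ z) hβ.1
  simpa [Equiv.Perm.mul_apply] using h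

lemma trichotomy (hdom : Dom β) (i : Fin 2) (x : Fin r) :
    wireP β i x ∨ inBP β i x ∨ tresP β i x := by
  rcases hdom i x with h | ⟨j, y, hne, hF, hT⟩
  · exact Or.inl h
  · by_cases hj : (β (i, x, false)).1 = i
    · exact Or.inr (Or.inl ⟨by rw [hF], hj⟩)
    · exact Or.inr (Or.inr ⟨by rw [hF], hj⟩)

lemma wire_beta_true (hβ : IsPairing β) {i : Fin 2} {x : Fin r} (h : wireP β i x) :
    β (i, x, true) = (i, x, false) := by
  have := beta_invol hβ (i, x, false)
  rw [h] at this; exact this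

lemma not_wire_of_false {i : Fin 2} {x : Fin r} (h2 : (β (i, x, false)).2.2 = false) :
    ¬ wireP β i x := by
  intro hw; rw [hw] at h2; simp at h2

lemma inB_betaF {i : Fin 2} {x : Fin r} (h : inBP β i x) :
    β (i, x, false) = (i, pnn β i x, false) := by
  obtain ⟨h1, h2⟩ := h
  unfold pnn
  ext <;> simp_all

lemma inB_spec (hβ : IsPairing β) (hdom : Dom β) {i : Fin 2} {x : Fin r} (h : inBP β i x) :
    β (i, x, true) = (i, pnn β i x, true) ∧ pnn β i x ≠ x ∧
      inBP β i (pnn β i x) ∧ pnn β i (pnn β i x) = x := by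
  have hF := inB_betaF h
  have hpne : pnn β i x ≠ x := by
    intro he
    exact hβ.2 (i, x, false) (by rw [hF, he])
  have htrans : β (i, pnn β i x, false) = (i, x, false) := by
    have := beta_invol hβ (i, x, false)
    rw [hF] at this
    exact this
  have hT : β (i, x, true) = (i, pnn β i x, true) := by
    rcases hdom i x with hw | ⟨j, y, hne, hF', hT'⟩
    · exact absurd hw (not_wire_of_false h.1)
    · rw [hF'] at hF
      have hj : j = i := by rw [Prod.ext_iff] at hF; exact hF.1
      have hy : y = pnn β i x := by
        rw [Prod.ext_iff] at hF; exact (Prod.ext_iff.mp hF.2).1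
      rw [hT', hj, hy]
  refine ⟨hT, hpne, ⟨by rw [htrans], by rw [htrans]⟩, ?_⟩
  show (β (i, pnn β i x, false)).2.1 = x
  rw [htrans]

lemma tres_spec (hβ : IsPairing β) (hdom : Dom β) {i : Fin 2} {x : Fin r} (h : tresP β i x) :
    β (i, x, false) = ((β (i, x, false)).1, pnn β i x, false) ∧
    β (i, x, true) = ((β (i, x, false)).1, pnn β i x, true) ∧
    tresP β ((β (i, x, false)).1) (pnn β i x) ∧
    pnn β ((β (i, x, false)).1) (pnn β i x) = x := by
  obtain ⟨h1, h2⟩ := h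
  have hF : β (i, x, false) = ((β (i, x, false)).1, pnn β i x, false) := by
    unfold pnn; ext <;> simp_all
  have htrans : β ((β (i, x, false)).1, pnn β i x, false) = (i, x, false) := by
    have := beta_invol hβ (i, x, false)
    nth_rewrite 1 [hF] at this
    exact this
  have hT : β (i, x, true) = ((β (i, x, false)).1, pnn β i x, true) := by
    rcases hdom i x with hw | ⟨j, y, hne, hF', hT'⟩
    · exact absurd hw (not_wire_of_false h1)
    · have hj : j = (β (i, x, false)).1 := by rw [hF']
      have hy : y = pnn β i x := by unfold pnn; rw [hF']
      rw [hT', hj, hy]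
  refine ⟨hF, hT, ⟨by rw [htrans], ?_⟩, ?_⟩
  · rw [htrans]; simpa using fun he => h2 he.symm
  · show (β ((β (i, x, false)).1, pnn β i x, false)).2.1 = x
    rw [htrans]

lemma fin2_ne_zero {j : Fin 2} (h : j ≠ 0) : j = 1 := by omega
lemma fin2_ne_one {j : Fin 2} (h : j ≠ 1) : j = 0 := by omega

/-! ### Row-local structures -/

variable (β)

abbrev T0 := {x : Fin r // tresP β 0 x}
abbrev Wt (i : Fin 2) := {x : Fin r // wireP β i x}
abbrev DL (i : Fin 2) := {x : Fin r // inBP β i x ∧ x < pnn β i x}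

variable {d : ℕ}

def resT (i : Fin 2) (u : Fin r → Fin d) : T0 β → Fin d :=
  fun x => u (if i = 0 then x.1 else pnn β 0 x.1)

def resW (i : Fin 2) (u : Fin r → Fin d) : Wt β i → Fin d := fun x => u x.1

def InvP (i : Fin 2) (u : Fin r → Fin d) : Prop :=
  ∀ x : Fin r, inBP β i x → u (pnn β i x) = u x

def RowC (i : Fin 2) (u v : Fin r → Fin d) : Prop :=
  InvP β i u ∧ InvP β i v ∧ ∀ x : Fin r, wireP β i x → u x = v x

variable {β}

lemma legVal_false {a b : Fin 2 → Fin r → Fin d} {i : Fin 2} {x : Fin r} :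
    legVal a b (i, x, false) = a i x := rfl
lemma legVal_true {a b : Fin 2 → Fin r → Fin d} {i : Fin 2} {x : Fin r} :
    legVal a b (i, x, true) = b i x := rfl

lemma resT_zero (u : Fin r → Fin d) (x : T0 β) : resT β 0 u x = u x.1 := by
  simp [resT]
lemma resT_one (u : Fin r → Fin d) (x : T0 β) : resT β 1 u x = u (pnn β 0 x.1) := by
  simp [resT]

lemma cond_iff (hβ : IsPairing β) (hdom : Dom β) (a b : Fin 2 → Fin r → Fin d) :
    (∀ z : Fin 2 × Fin r × Bool, legVal a b z = legVal a b (β z)) ↔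
      (RowC β 0 (a 0) (b 0) ∧ RowC β 1 (a 1) (b 1) ∧
        resT β 0 (a 0) = resT β 1 (a 1) ∧ resT β 0 (b 0) = resT β 1 (b 1)) := by
  constructor
  · intro h
    have hrow : ∀ i : Fin 2, RowC β i (a i) (b i) := by
      intro i
      refine ⟨?_, ?_, ?_⟩
      · intro x hx
        have h1 := h (i, x, false)
        rw [inB_betaF hx] at h1
        rw [legVal_false, legVal_false] at h1
        exact h1.symm
      · intro x hx
        have h1 := h (i, x, true)
        rw [(inB_spec hβ hdom hx).1] at h1
        rw [legVal_true, legVal_true] at h1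
        exact h1.symm
      · intro x hx
        have h1 := h (i, x, false)
        rw [hx] at h1
        rw [legVal_false, legVal_true] at h1
        exact h1
    refine ⟨hrow 0, hrow 1, ?_, ?_⟩
    · funext x
      rw [resT_zero, resT_one]
      have h1 := h (0, x.1, false)
      have hspec := tres_spec hβ hdom x.2
      rw [hspec.1] at h1
      have hj : (β (0, x.1, false)).1 = 1 := fin2_ne_zero x.2.2
      rw [hj] at h1
      rw [legVal_false, legVal_false] at h1
      exact h1
    · funext x
      rw [resT_zero, resT_one]
      have h1 := h (0, x.1, true)
      have hspec := tres_spec hβ hdom x.2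
      rw [hspec.2.1] at h1
      have hj : (β (0, x.1, false)).1 = 1 := fin2_ne_zero x.2.2
      rw [hj] at h1
      rw [legVal_true, legVal_true] at h1
      exact h1
  · rintro ⟨h0, h1, la, lb⟩ z
    obtain ⟨i, x, s⟩ := z
    have hrow : ∀ i : Fin 2, RowC β i (a i) (b i) := by
      intro i; fin_cases i
      · exact h0
      · exact h1
    rcases trichotomy hdom i x with hw | hB | hT
    · cases s
      · rw [hw, legVal_false, legVal_true]
        exact (hrow i).2.2 x hw
      · rw [wire_beta_true hβ hw, legVal_true, legVal_false]
        exact ((hrow i).2.2 x hw).symm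
    · have hspec := inB_spec hβ hdom hB
      cases s
      · rw [inB_betaF hB, legVal_false, legVal_false]
        exact ((hrow i).1 x hB).symm
      · rw [hspec.1, legVal_true, legVal_true]
        exact ((hrow i).2.1 x hB).symm
    · have hspec := tres_spec hβ hdom hT
      by_cases hi : i = 0
      · subst hi
        have hj : (β (0, x, false)).1 = 1 := fin2_ne_zero hT.2
        cases s
        · rw [hspec.1, hj, legVal_false, legVal_false]
          have := congrFun la ⟨x, hT⟩
          rw [resT_zero, resT_one] at this
          exact this
        · rw [hspec.2.1, hj, legVal_true, legVal_true]
          have := congrFun lb ⟨x, hT⟩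
          rw [resT_zero, resT_one] at this
          exact this
      · have hi1 : i = 1 := fin2_ne_zero hi
        subst hi1
        have hj : (β (1, x, false)).1 = 0 := fin2_ne_one hT.2
        have htr0 : tresP β 0 (pnn β 1 x) := by
          have := hspec.2.2.1; rwa [hj] at this
        have hpn : pnn β 0 (pnn β 1 x) = x := by
          have := hspec.2.2.2; rwa [hj] at this
        cases s
        · rw [hspec.1, hj, legVal_false, legVal_false]
          have := congrFun la ⟨pnn β 1 x, htr0⟩
          rw [resT_zero, resT_one, hpn] at this
          exact this.symm
        · rw [hspec.2.1, hj, legVal_true, legVal_true]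
          have := congrFun lb ⟨pnn β 1 x, htr0⟩
          rw [resT_zero, resT_one, hpn] at this
          exact this.symm

/-! ### The decomposition of `fBeta` -/

variable (β)

noncomputable def g (ρ : Matrix (Fin r → Fin d) (Fin r → Fin d) ℂ) (i : Fin 2)
    (s t : T0 β → Fin d) : ℂ :=
  ∑ p : (Fin r → Fin d) × (Fin r → Fin d),
    ρ p.1 p.2 * eI (RowC β i p.1 p.2) * (eI (resT β i p.1 = s) * eI (resT β i p.2 = t))

noncomputable def Fd (ρ : Matrix (Fin r → Fin d) (Fin r → Fin d) ℂ) (i : Fin 2)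
    (p : (Fin r → Fin d) × (Fin r → Fin d)) : ℂ :=
  ρ p.1 p.2 * eI (RowC β i p.1 p.2)

def phiD (i : Fin 2) (p : (Fin r → Fin d) × (Fin r → Fin d)) :
    (T0 β → Fin d) × (T0 β → Fin d) :=
  (resT β i p.1, resT β i p.2)

variable {β}

lemma g_eq (ρ : Matrix (Fin r → Fin d) (Fin r → Fin d) ℂ) (i : Fin 2)
    (s t : T0 β → Fin d) :
    g β ρ i s t = ∑ x : (Fin r → Fin d) × (Fin r → Fin d),
      Fd β ρ i x * eI (phiD β i x = (s, t)) := by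
  unfold g Fd phiD
  refine Finset.sum_congr rfl fun p _ => ?_
  rw [Prod.mk.injEq, ← eI_mul, mul_assoc]

set_option maxHeartbeats 1000000 in
lemma fBeta_eq (hβ : IsPairing β) (hdom : Dom β)
    (ρ : Matrix (Fin r → Fin d) (Fin r → Fin d) ℂ) :
    fBeta β ρ = ∑ s : T0 β → Fin d, ∑ t : T0 β → Fin d, g β ρ 0 s t * g β ρ 1 s t := by
  have key : ∀ (a b : Fin 2 → Fin r → Fin d),
      (∏ i : Fin 2, ρ (a i) (b i)) *
        (if ∀ z : Fin 2 × Fin r × Bool, legVal a b z = legVal a b (β z) then 1 else 0) =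
      Fd β ρ 0 (a 0, b 0) * Fd β ρ 1 (a 1, b 1) *
        eI (phiD β 0 (a 0, b 0) = phiD β 1 (a 1, b 1)) := by
    intro a b
    rw [Fin.prod_univ_two, eI_ite, eI_congr (cond_iff hβ hdom a b)]
    have h34 : eI (phiD β 0 (a 0, b 0) = phiD β 1 (a 1, b 1)) =
        eI (resT β 0 (a 0) = resT β 1 (a 1) ∧ resT β 0 (b 0) = resT β 1 (b 1)) := by
      unfold phiD
      rw [Prod.mk.injEq]
    rw [← eI_mul, ← eI_mul, ← h34]
    unfold Fd
    ring
  calc fBeta β ρ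
      = ∑ a : Fin 2 → Fin r → Fin d, ∑ b : Fin 2 → Fin r → Fin d,
          Fd β ρ 0 (a 0, b 0) * Fd β ρ 1 (a 1, b 1) *
            eI (phiD β 0 (a 0, b 0) = phiD β 1 (a 1, b 1)) := by
        unfold fBeta
        exact Finset.sum_congr rfl fun a _ => Finset.sum_congr rfl fun b _ => key a b
    _ = ∑ pa : (Fin r → Fin d) × (Fin r → Fin d), ∑ b : Fin 2 → Fin r → Fin d,
          Fd β ρ 0 (pa.1, b 0) * Fd β ρ 1 (pa.2, b 1) *
            eI (phiD β 0 (pa.1, b 0) = phiD β 1 (pa.2, b 1)) := by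
        refine (Fintype.sum_equiv (finTwoArrowEquiv (Fin r → Fin d)).symm _ _ fun pa => ?_).symm
        refine Finset.sum_congr rfl fun b _ => ?_
        simp [finTwoArrowEquiv]
    _ = ∑ pa : (Fin r → Fin d) × (Fin r → Fin d), ∑ pb : (Fin r → Fin d) × (Fin r → Fin d),
          Fd β ρ 0 (pa.1, pb.1) * Fd β ρ 1 (pa.2, pb.2) *
            eI (phiD β 0 (pa.1, pb.1) = phiD β 1 (pa.2, pb.2)) := by
        refine Finset.sum_congr rfl fun pa _ => ?_
        refine (Fintype.sum_equiv (finTwoArrowEquiv (Fin r → Fin d)).symm _ _ fun pb => ?_).symm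
        simp [finTwoArrowEquiv]
    _ = ∑ a0 : Fin r → Fin d, ∑ a1 : Fin r → Fin d, ∑ b0 : Fin r → Fin d, ∑ b1 : Fin r → Fin d,
          Fd β ρ 0 (a0, b0) * Fd β ρ 1 (a1, b1) *
            eI (phiD β 0 (a0, b0) = phiD β 1 (a1, b1)) := by
        rw [Fintype.sum_prod_type]
        exact Finset.sum_congr rfl fun a0 _ => Finset.sum_congr rfl fun a1 _ =>
          Fintype.sum_prod_type _
    _ = ∑ a0 : Fin r → Fin d, ∑ b0 : Fin r → Fin d, ∑ a1 : Fin r → Fin d, ∑ b1 : Fin r → Fin d,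
          Fd β ρ 0 (a0, b0) * Fd β ρ 1 (a1, b1) *
            eI (phiD β 0 (a0, b0) = phiD β 1 (a1, b1)) :=
        Finset.sum_congr rfl fun a0 _ => Finset.sum_comm
    _ = ∑ x : (Fin r → Fin d) × (Fin r → Fin d), ∑ y : (Fin r → Fin d) × (Fin r → Fin d),
          Fd β ρ 0 x * Fd β ρ 1 y * eI (phiD β 0 x = phiD β 1 y) := by
        refine Eq.symm ?_
        rw [Fintype.sum_prod_type]
        exact Finset.sum_congr rfl fun a0 _ => Finset.sum_congr rfl fun b0 _ =>
          Fintype.sum_prod_type _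
    _ = ∑ m : (T0 β → Fin d) × (T0 β → Fin d),
          (∑ x : (Fin r → Fin d) × (Fin r → Fin d), Fd β ρ 0 x * eI (phiD β 0 x = m)) *
          (∑ y : (Fin r → Fin d) × (Fin r → Fin d), Fd β ρ 1 y * eI (phiD β 1 y = m)) :=
        decouple (Fd β ρ 0) (Fd β ρ 1) (phiD β 0) (phiD β 1)
    _ = ∑ s : T0 β → Fin d, ∑ t : T0 β → Fin d, g β ρ 0 s t * g β ρ 1 s t := by
        rw [Fintype.sum_prod_type]
        exact Finset.sum_congr rfl fun s _ => Finset.sum_congr rfl fun t _ => by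
          rw [g_eq, g_eq]

/-! ### Gram representation of `g` -/

lemma RowC_iff (i : Fin 2) (u v : Fin r → Fin d) :
    RowC β i u v ↔ (InvP β i u ∧ InvP β i v ∧ resW β i u = resW β i v) := by
  unfold RowC
  refine and_congr Iff.rfl (and_congr Iff.rfl ?_)
  constructor
  · intro h; funext x; exact h x.1 x.2
  · intro h x hx; exact congrFun h ⟨x, hx⟩

variable (β) in
noncomputable def w (C : Matrix (Fin r → Fin d) (Fin r → Fin d) ℂ) (i : Fin 2)
    (m : (Fin r → Fin d) × (Wt β i → Fin d)) (s : T0 β → Fin d) : ℂ :=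
  ∑ u : Fin r → Fin d,
    C m.1 u * (eI (InvP β i u) * (eI (resW β i u = m.2) * eI (resT β i u = s)))

set_option maxHeartbeats 1000000 in
lemma g_gram (C : Matrix (Fin r → Fin d) (Fin r → Fin d) ℂ) (i : Fin 2)
    (s t : T0 β → Fin d) :
    g β (Cᴴ * C) i s t = ∑ m : (Fin r → Fin d) × (Wt β i → Fin d),
      (starRingEnd ℂ) (w β C i m s) * w β C i m t := by
  symm
  calc (∑ m : (Fin r → Fin d) × (Wt β i → Fin d),
          (starRingEnd ℂ) (w β C i m s) * w β C i m t)
      = ∑ m : (Fin r → Fin d) × (Wt β i → Fin d), ∑ u : Fin r → Fin d, ∑ v : Fin r → Fin d,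
          ((starRingEnd ℂ) (C m.1 u) *
              (eI (InvP β i u) * (eI (resW β i u = m.2) * eI (resT β i u = s)))) *
            (C m.1 v * (eI (InvP β i v) * (eI (resW β i v = m.2) * eI (resT β i v = t)))) := by
        refine Finset.sum_congr rfl fun m _ => ?_
        unfold w
        rw [map_sum, Finset.sum_mul_sum]
        refine Finset.sum_congr rfl fun u _ => Finset.sum_congr rfl fun v _ => ?_
        rw [map_mul, map_mul, map_mul, conj_eI, conj_eI, conj_eI]
    _ = ∑ u : Fin r → Fin d, ∑ v : Fin r → Fin d,
          ∑ m : (Fin r → Fin d) × (Wt β i → Fin d),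
          ((starRingEnd ℂ) (C m.1 u) *
              (eI (InvP β i u) * (eI (resW β i u = m.2) * eI (resT β i u = s)))) *
            (C m.1 v * (eI (InvP β i v) * (eI (resW β i v = m.2) * eI (resT β i v = t)))) := by
        rw [Finset.sum_comm]
        exact Finset.sum_congr rfl fun u _ => Finset.sum_comm
    _ = ∑ u : Fin r → Fin d, ∑ v : Fin r → Fin d,
          (Cᴴ * C) u v * eI (RowC β i u v) * (eI (resT β i u = s) * eI (resT β i v = t)) := by
        refine Finset.sum_congr rfl fun u _ => Finset.sum_congr rfl fun v _ => ?_
        have hstep : ∀ m : (Fin r → Fin d) × (Wt β i → Fin d),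
            ((starRingEnd ℂ) (C m.1 u) *
              (eI (InvP β i u) * (eI (resW β i u = m.2) * eI (resT β i u = s)))) *
            (C m.1 v * (eI (InvP β i v) * (eI (resW β i v = m.2) * eI (resT β i v = t)))) =
            ((starRingEnd ℂ) (C m.1 u) * C m.1 v *
                (eI (resW β i u = m.2) * eI (resW β i v = m.2))) *
              (eI (InvP β i u) * eI (InvP β i v) * (eI (resT β i u = s) * eI (resT β i v = t))) :=
          fun m => by ring
        rw [Finset.sum_congr rfl fun m _ => hstep m, ← Finset.sum_mul]
        have hm : (∑ m : (Fin r → Fin d) × (Wt β i → Fin d),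
            (starRingEnd ℂ) (C m.1 u) * C m.1 v *
              (eI (resW β i u = m.2) * eI (resW β i v = m.2))) =
            (Cᴴ * C) u v * eI (resW β i u = resW β i v) := by
          rw [Fintype.sum_prod_type]
          dsimp only
          rw [← Finset.sum_mul_sum]
          congr 1
          · exact sum_eI _ _
        rw [hm]
        have hR : eI (RowC β i u v) =
            eI (InvP β i u) * eI (InvP β i v) * eI (resW β i u = resW β i v) := by
          rw [eI_mul, eI_mul]
          exact eI_congr ((RowC_iff i u v).trans (by tauto))
        rw [hR]
        ring
    _ = g β (Cᴴ * C) i s t := by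
        unfold g
        refine Eq.symm ?_
        rw [Fintype.sum_prod_type]

/-! ### Counting the classes -/

lemma eR_mul (P Q : Prop) : eR P * eR Q = eR (P ∧ Q) := by
  by_cases hp : P <;> by_cases hq : Q <;>
    simp [eR_of, eR_not, hp, hq, eR_not (P := P ∧ Q), not_and_of_not_left, not_and_of_not_right]

instance (i : Fin 2) (u : Fin r → Fin d) : Decidable (InvP β i u) := by
  unfold InvP; infer_instance

lemma class_card (hβ : IsPairing β) (hdom : Dom β) (i : Fin 2)
    (wv : Wt β i → Fin d) (s : T0 β → Fin d) :
    (univ.filter fun u : Fin r → Fin d =>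
        InvP β i u ∧ resW β i u = wv ∧ resT β i u = s).card ≤
      d ^ Fintype.card (DL β i) := by
  have hinj : Set.InjOn (fun (u : Fin r → Fin d) => (fun x : DL β i => u x.1))
      ((univ.filter fun u : Fin r → Fin d =>
        InvP β i u ∧ resW β i u = wv ∧ resT β i u = s : Finset (Fin r → Fin d)) :
          Set (Fin r → Fin d)) := by
    intro u hu u' hu' he
    simp only [Finset.coe_filter, Set.mem_setOf_eq, mem_univ, true_and] at hu hu'
    obtain ⟨hIu, hWu, hTu⟩ := hu
    obtain ⟨hIu', hWu', hTu'⟩ := hu'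
    funext x
    rcases trichotomy hdom i x with hw | hB | hT
    · have h1 : u x = wv ⟨x, hw⟩ := congrFun hWu ⟨x, hw⟩
      have h2 : u' x = wv ⟨x, hw⟩ := congrFun hWu' ⟨x, hw⟩
      rw [h1, h2]
    · have hspec := inB_spec hβ hdom hB
      rcases lt_trichotomy x (pnn β i x) with hlt | heq | hgt
      · exact congrFun he (⟨x, hB, hlt⟩ : DL β i)
      · exact absurd heq.symm hspec.2.1
      · set y := pnn β i x with hy
        have hBy : inBP β i y := hspec.2.2.1
        have hyx : pnn β i y = x := hspec.2.2.2
        have hlt' : y < pnn β i y := by rw [hyx]; exact hgt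
        have h1 : u y = u' y := congrFun he (⟨y, hBy, hlt'⟩ : DL β i)
        have h2 : u x = u y := by rw [← hyx]; exact hIu y hBy
        have h3 : u' x = u' y := by rw [← hyx]; exact hIu' y hBy
        rw [h2, h3, h1]
    · by_cases hi : i = 0
      · subst hi
        have h1 : u x = s ⟨x, hT⟩ := by
          have := congrFun hTu ⟨x, hT⟩
          rwa [resT_zero] at this
        have h2 : u' x = s ⟨x, hT⟩ := by
          have := congrFun hTu' ⟨x, hT⟩
          rwa [resT_zero] at this
        rw [h1, h2]
      · have hi1 : i = 1 := fin2_ne_zero hi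
        subst hi1
        have hspec := tres_spec hβ hdom hT
        have hj : (β (1, x, false)).1 = 0 := fin2_ne_one hT.2
        have htr0 : tresP β 0 (pnn β 1 x) := by
          have := hspec.2.2.1; rwa [hj] at this
        have hpn : pnn β 0 (pnn β 1 x) = x := by
          have := hspec.2.2.2; rwa [hj] at this
        have h1 : u x = s ⟨pnn β 1 x, htr0⟩ := by
          have := congrFun hTu ⟨pnn β 1 x, htr0⟩
          rwa [resT_one, hpn] at this
        have h2 : u' x = s ⟨pnn β 1 x, htr0⟩ := by
          have := congrFun hTu' ⟨pnn β 1 x, htr0⟩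
          rwa [resT_one, hpn] at this
        rw [h1, h2]
  calc (univ.filter fun u : Fin r → Fin d =>
      InvP β i u ∧ resW β i u = wv ∧ resT β i u = s).card
      ≤ (univ : Finset (DL β i → Fin d)).card :=
        Finset.card_le_card_of_injOn _ (fun u _ => mem_univ _) hinj
    _ = d ^ Fintype.card (DL β i) := by
        rw [Finset.card_univ, Fintype.card_fun, Fintype.card_fin]

lemma w_filter (C : Matrix (Fin r → Fin d) (Fin r → Fin d) ℂ) (i : Fin 2)
    (m : (Fin r → Fin d) × (Wt β i → Fin d)) (s : T0 β → Fin d) :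
    w β C i m s = ∑ u ∈ univ.filter
      (fun u : Fin r → Fin d => InvP β i u ∧ resW β i u = m.2 ∧ resT β i u = s),
      C m.1 u := by
  rw [← sum_filter_eI]
  unfold w
  exact Finset.sum_congr rfl fun u _ => by rw [eI_mul, eI_mul]

lemma trace_fact (C : Matrix (Fin r → Fin d) (Fin r → Fin d) ℂ)
    (htr : (Cᴴ * C).trace = 1) :
    (∑ k : Fin r → Fin d, ∑ u : Fin r → Fin d, ‖C k u‖ ^ 2) = 1 := by
  have h : ((∑ k : Fin r → Fin d, ∑ u : Fin r → Fin d, ‖C k u‖ ^ 2 : ℝ) : ℂ)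
      = 1 := by
    push_cast
    rw [← htr]
    unfold Matrix.trace
    calc (∑ k : Fin r → Fin d, ∑ u : Fin r → Fin d, ((‖C k u‖ : ℂ) ^ 2))
        = ∑ k : Fin r → Fin d, ∑ u : Fin r → Fin d,
            (starRingEnd ℂ) (C k u) * C k u := by
          refine Finset.sum_congr rfl fun k _ => Finset.sum_congr rfl fun u _ => ?_
          rw [← Complex.normSq_eq_conj_mul_self]
          norm_cast
          exact Complex.sq_norm _
        _ = ∑ u : Fin r → Fin d, ∑ k : Fin r → Fin d,
            (starRingEnd ℂ) (C k u) * C k u := Finset.sum_comm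
        _ = ∑ u : Fin r → Fin d, (Cᴴ * C) u u := by
          refine Finset.sum_congr rfl fun u _ => ?_
          rw [Matrix.mul_apply]
          exact Finset.sum_congr rfl fun k _ => rfl
        _ = _ := rfl
  exact_mod_cast h

lemma eR_congr {P Q : Prop} (h : P ↔ Q) : eR P = eR Q := by
  by_cases hp : P
  · rw [eR_of hp, eR_of (h.mp hp)]
  · rw [eR_not hp, eR_not (fun hq => hp (h.mpr hq))]

set_option maxHeartbeats 1000000 in
lemma inner_le_one (hβ : IsPairing β) (hdom : Dom β)
    (C : Matrix (Fin r → Fin d) (Fin r → Fin d) ℂ) (htr : (Cᴴ * C).trace = 1) (i : Fin 2) :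
    (∑ s : T0 β → Fin d, ∑ m : (Fin r → Fin d) × (Wt β i → Fin d),
      ∑ u ∈ univ.filter (fun u : Fin r → Fin d =>
        InvP β i u ∧ resW β i u = m.2 ∧ resT β i u = s),
        ‖C m.1 u‖ ^ 2) ≤ 1 := by
  have habs : ∀ (k u : Fin r → Fin d), (0:ℝ) ≤ ‖C k u‖ ^ 2 :=
    fun k u => pow_nonneg (norm_nonneg _) 2
  calc (∑ s : T0 β → Fin d, ∑ m : (Fin r → Fin d) × (Wt β i → Fin d),
      ∑ u ∈ univ.filter (fun u : Fin r → Fin d =>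
        InvP β i u ∧ resW β i u = m.2 ∧ resT β i u = s),
        ‖C m.1 u‖ ^ 2)
      = ∑ m : (Fin r → Fin d) × (Wt β i → Fin d), ∑ s : T0 β → Fin d,
          ∑ u : Fin r → Fin d, ‖C m.1 u‖ ^ 2 *
            eR (InvP β i u ∧ resW β i u = m.2 ∧ resT β i u = s) := by
        rw [Finset.sum_comm]
        exact Finset.sum_congr rfl fun m _ => Finset.sum_congr rfl fun sv _ =>
          sum_filter_eR _ _
    _ = ∑ m : (Fin r → Fin d) × (Wt β i → Fin d), ∑ u : Fin r → Fin d,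
          ∑ s : T0 β → Fin d, ‖C m.1 u‖ ^ 2 *
            eR (InvP β i u ∧ resW β i u = m.2 ∧ resT β i u = s) :=
        Finset.sum_congr rfl fun m _ => Finset.sum_comm
    _ = ∑ m : (Fin r → Fin d) × (Wt β i → Fin d), ∑ u : Fin r → Fin d,
          ‖C m.1 u‖ ^ 2 * eR (InvP β i u ∧ resW β i u = m.2) := by
        refine Finset.sum_congr rfl fun m _ => Finset.sum_congr rfl fun u _ => ?_
        have hsplit : ∀ sv : T0 β → Fin d,
            eR (InvP β i u ∧ resW β i u = m.2 ∧ resT β i u = sv) =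
            eR (InvP β i u ∧ resW β i u = m.2) * eR (resT β i u = sv) := by
          intro sv
          rw [eR_mul]
          exact eR_congr (by tauto)
        calc (∑ sv : T0 β → Fin d, ‖C m.1 u‖ ^ 2 *
                eR (InvP β i u ∧ resW β i u = m.2 ∧ resT β i u = sv))
            = ∑ sv : T0 β → Fin d, (‖C m.1 u‖ ^ 2 *
                eR (InvP β i u ∧ resW β i u = m.2)) * eR (resT β i u = sv) := by
              refine Finset.sum_congr rfl fun sv _ => ?_
              rw [hsplit sv, mul_assoc]
          _ = ‖C m.1 u‖ ^ 2 * eR (InvP β i u ∧ resW β i u = m.2) := by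
              rw [← Finset.mul_sum, sum_eR_eq_one, mul_one]
    _ = ∑ k : Fin r → Fin d, ∑ u : Fin r → Fin d,
          ∑ wv : Wt β i → Fin d,
          ‖C k u‖ ^ 2 * eR (InvP β i u ∧ resW β i u = wv) := by
        rw [Fintype.sum_prod_type]
        exact Finset.sum_congr rfl fun k _ => Finset.sum_comm
    _ = ∑ k : Fin r → Fin d, ∑ u : Fin r → Fin d,
          ‖C k u‖ ^ 2 * eR (InvP β i u) := by
        refine Finset.sum_congr rfl fun k _ => Finset.sum_congr rfl fun u _ => ?_
        have hsplit : ∀ wv : Wt β i → Fin d,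
            eR (InvP β i u ∧ resW β i u = wv) =
            eR (InvP β i u) * eR (resW β i u = wv) := fun wv => (eR_mul _ _).symm
        calc (∑ wv : Wt β i → Fin d,
                ‖C k u‖ ^ 2 * eR (InvP β i u ∧ resW β i u = wv))
            = ∑ wv : Wt β i → Fin d, (‖C k u‖ ^ 2 *
                eR (InvP β i u)) * eR (resW β i u = wv) := by
              refine Finset.sum_congr rfl fun wv _ => ?_
              rw [hsplit wv, mul_assoc]
          _ = ‖C k u‖ ^ 2 * eR (InvP β i u) := by
              rw [← Finset.mul_sum, sum_eR_eq_one, mul_one]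
    _ ≤ ∑ k : Fin r → Fin d, ∑ u : Fin r → Fin d, ‖C k u‖ ^ 2 := by
        refine Finset.sum_le_sum fun k _ => Finset.sum_le_sum fun u _ => ?_
        exact mul_le_of_le_one_right (habs k u) (eR_le_one _)
    _ = 1 := trace_fact C htr

set_option maxHeartbeats 1000000 in
lemma row_bound (hβ : IsPairing β) (hdom : Dom β)
    (C : Matrix (Fin r → Fin d) (Fin r → Fin d) ℂ) (htr : (Cᴴ * C).trace = 1) (i : Fin 2) :
    (∑ s : T0 β → Fin d, ∑ t : T0 β → Fin d,
      ‖g β (Cᴴ * C) i s t‖ ^ 2) ≤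
      ((d : ℝ) ^ Fintype.card (DL β i)) ^ 2 := by
  have hg : ∀ s t : T0 β → Fin d, ‖g β (Cᴴ * C) i s t‖ ^ 2 ≤
      (∑ m : (Fin r → Fin d) × (Wt β i → Fin d), ‖w β C i m s‖ ^ 2) *
      (∑ m : (Fin r → Fin d) × (Wt β i → Fin d), ‖w β C i m t‖ ^ 2) := by
    intro s t
    rw [g_gram]
    have h := cs_complex (fun m => (starRingEnd ℂ) (w β C i m s)) (fun m => w β C i m t)
    simpa [Complex.norm_conj] using h
  have hNnonneg : (0:ℝ) ≤ ∑ s : T0 β → Fin d,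
      ∑ m : (Fin r → Fin d) × (Wt β i → Fin d), ‖w β C i m s‖ ^ 2 :=
    Finset.sum_nonneg fun s _ => Finset.sum_nonneg fun m _ =>
      pow_nonneg (norm_nonneg _) 2
  have hNbound : (∑ s : T0 β → Fin d,
      ∑ m : (Fin r → Fin d) × (Wt β i → Fin d), ‖w β C i m s‖ ^ 2) ≤
      (d : ℝ) ^ Fintype.card (DL β i) := by
    calc (∑ s : T0 β → Fin d,
        ∑ m : (Fin r → Fin d) × (Wt β i → Fin d), ‖w β C i m s‖ ^ 2)
        ≤ ∑ s : T0 β → Fin d, ∑ m : (Fin r → Fin d) × (Wt β i → Fin d),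
            (d : ℝ) ^ Fintype.card (DL β i) *
            ∑ u ∈ univ.filter (fun u : Fin r → Fin d =>
              InvP β i u ∧ resW β i u = m.2 ∧ resT β i u = s),
              ‖C m.1 u‖ ^ 2 := by
          refine Finset.sum_le_sum fun s _ => Finset.sum_le_sum fun m _ => ?_
          rw [w_filter]
          refine le_trans (cs_card _ _) ?_
          refine mul_le_mul_of_nonneg_right ?_ (Finset.sum_nonneg fun u _ =>
            pow_nonneg (norm_nonneg _) 2)
          have := class_card hβ hdom i m.2 s
          calc ((univ.filter fun u : Fin r → Fin d =>
              InvP β i u ∧ resW β i u = m.2 ∧ resT β i u = s).card : ℝ)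
              ≤ ((d ^ Fintype.card (DL β i) : ℕ) : ℝ) := Nat.cast_le.mpr this
            _ = (d : ℝ) ^ Fintype.card (DL β i) := by push_cast; ring
      _ = (d : ℝ) ^ Fintype.card (DL β i) *
          ∑ s : T0 β → Fin d, ∑ m : (Fin r → Fin d) × (Wt β i → Fin d),
            ∑ u ∈ univ.filter (fun u : Fin r → Fin d =>
              InvP β i u ∧ resW β i u = m.2 ∧ resT β i u = s),
              ‖C m.1 u‖ ^ 2 := by
          rw [Finset.mul_sum]
          exact Finset.sum_congr rfl fun s _ => by rw [Finset.mul_sum]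
      _ ≤ (d : ℝ) ^ Fintype.card (DL β i) * 1 := by
          refine mul_le_mul_of_nonneg_left (inner_le_one hβ hdom C htr i) ?_
          positivity
      _ = (d : ℝ) ^ Fintype.card (DL β i) := mul_one _
  calc (∑ s : T0 β → Fin d, ∑ t : T0 β → Fin d,
      ‖g β (Cᴴ * C) i s t‖ ^ 2)
      ≤ ∑ s : T0 β → Fin d, ∑ t : T0 β → Fin d,
          (∑ m : (Fin r → Fin d) × (Wt β i → Fin d), ‖w β C i m s‖ ^ 2) *
          (∑ m : (Fin r → Fin d) × (Wt β i → Fin d), ‖w β C i m t‖ ^ 2) :=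
        Finset.sum_le_sum fun s _ => Finset.sum_le_sum fun t _ => hg s t
    _ = (∑ s : T0 β → Fin d,
          ∑ m : (Fin r → Fin d) × (Wt β i → Fin d), ‖w β C i m s‖ ^ 2) ^ 2 := by
        rw [sq]
        exact (Finset.sum_mul_sum _ _ _ _).symm
    _ ≤ ((d : ℝ) ^ Fintype.card (DL β i)) ^ 2 :=
        pow_le_pow_left₀ hNnonneg hNbound 2

/-! ### Counting: `bigBin` versus `DL` -/

lemma bigBin_pred (hβ : IsPairing β) (hdom : Dom β) (i : Fin 2) (x : Fin r) :
    (∃ y : Fin r, y ≠ x ∧ β (i, x, false) = (i, y, false)) ↔ inBP β i x := by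
  constructor
  · rintro ⟨y, hne, h⟩
    exact ⟨by rw [h], by rw [h]⟩
  · intro h
    exact ⟨pnn β i x, (inB_spec hβ hdom h).2.1, inB_betaF h⟩

lemma card_inB_eq (hβ : IsPairing β) (hdom : Dom β) (i : Fin 2) :
    (univ.filter (inBP β i)).card = 2 * Fintype.card (DL β i) := by
  have hDL : Fintype.card (DL β i) =
      (univ.filter fun x : Fin r => inBP β i x ∧ x < pnn β i x).card :=
    Fintype.card_subtype _
  have hsplit : univ.filter (inBP β i) =
      (univ.filter fun x : Fin r => inBP β i x ∧ x < pnn β i x) ∪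
      (univ.filter fun x : Fin r => inBP β i x ∧ pnn β i x < x) := by
    ext x
    simp only [mem_filter, mem_union, mem_univ, true_and]
    constructor
    · intro hx
      rcases lt_trichotomy x (pnn β i x) with h | h | h
      · exact Or.inl ⟨hx, h⟩
      · exact absurd h.symm (inB_spec hβ hdom hx).2.1
      · exact Or.inr ⟨hx, h⟩
    · rintro (⟨hx, _⟩ | ⟨hx, _⟩) <;> exact hx
  have hdisj : Disjoint
      (univ.filter fun x : Fin r => inBP β i x ∧ x < pnn β i x)
      (univ.filter fun x : Fin r => inBP β i x ∧ pnn β i x < x) := by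
    rw [Finset.disjoint_left]
    intro x hx hx'
    simp only [mem_filter, mem_univ, true_and] at hx hx'
    exact absurd (lt_trans hx.2 hx'.2) (lt_irrefl x)
  have hbij : (univ.filter fun x : Fin r => inBP β i x ∧ x < pnn β i x).card =
      (univ.filter fun x : Fin r => inBP β i x ∧ pnn β i x < x).card := by
    refine Finset.card_bij (fun x _ => pnn β i x) ?_ ?_ ?_
    · intro x hx
      simp only [mem_filter, mem_univ, true_and] at hx ⊢
      have hspec := inB_spec hβ hdom hx.1
      exact ⟨hspec.2.2.1, by rw [hspec.2.2.2]; exact hx.2⟩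
    · intro x hx x' hx' he
      have he' : pnn β i x = pnn β i x' := he
      simp only [mem_filter, mem_univ, true_and] at hx hx'
      have h1 := (inB_spec hβ hdom hx.1).2.2.2
      have h2 := (inB_spec hβ hdom hx'.1).2.2.2
      rw [← h1, ← h2, he']
    · intro y hy
      simp only [mem_filter, mem_univ, true_and] at hy ⊢
      have hspec := inB_spec hβ hdom hy.1
      refine ⟨pnn β i y, ⟨hspec.2.2.1, ?_⟩, hspec.2.2.2⟩
      rw [hspec.2.2.2]; exact hy.2
  rw [hsplit, Finset.card_union_of_disjoint hdisj, ← hbij, hDL]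
  ring

lemma bigBin_eq (hβ : IsPairing β) (hdom : Dom β) :
    bigBin β = 2 * Fintype.card (DL β 0) + 2 * Fintype.card (DL β 1) := by
  unfold bigBin
  have h1 : (univ.filter fun ix : Fin 2 × Fin r =>
      ∃ y : Fin r, y ≠ ix.2 ∧ β (ix.1, ix.2, false) = (ix.1, y, false)).card =
      (univ.filter fun ix : Fin 2 × Fin r => inBP β ix.1 ix.2).card := by
    rw [Finset.card_filter, Finset.card_filter]
    exact Finset.sum_congr rfl fun ix _ =>
      if_congr (bigBin_pred hβ hdom ix.1 ix.2) rfl rfl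
  rw [h1]
  have h2 : (univ.filter fun ix : Fin 2 × Fin r => inBP β ix.1 ix.2).card =
      (univ.filter (inBP β 0)).card + (univ.filter (inBP β 1)).card := by
    rw [Finset.card_filter, Fintype.sum_prod_type, Fin.sum_univ_two,
      Finset.card_filter, Finset.card_filter]
  rw [h2, card_inB_eq hβ hdom 0, card_inB_eq hβ hdom 1]

end Stmt19Aux

set_option maxHeartbeats 2000000 in
theorem stmt19 (r d : ℕ) (hr : 1 ≤ r) (hd : 1 ≤ d)
    (β : Equiv.Perm (Fin 2 × Fin r × Bool)) (hβ : IsPairing β)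
    (hdom : ∀ (i : Fin 2) (x : Fin r),
      β (i, x, false) = (i, x, true) ∨
      ∃ (j : Fin 2) (y : Fin r), (j, y) ≠ (i, x) ∧
        β (i, x, false) = (j, y, false) ∧ β (i, x, true) = (j, y, true))
    (ρ : Matrix (Fin r → Fin d) (Fin r → Fin d) ℂ)
    (hρ : ρ.PosSemidef) (hρt : ρ.trace = 1) :
    ‖fBeta β ρ‖ ^ 2 ≤ (d : ℝ) ^ bigBin β := by
  obtain ⟨C, hC⟩ : ∃ C : Matrix (Fin r → Fin d) (Fin r → Fin d) ℂ, ρ = C.conjTranspose * C := by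
    classical
    open MatrixOrder in
    obtain ⟨B, hB⟩ := CStarAlgebra.nonneg_iff_eq_star_mul_self.mp hρ.nonneg
    exact ⟨B, by rw [hB, Matrix.star_eq_conjTranspose]⟩
  have htr : (C.conjTranspose * C).trace = 1 := by rw [← hC]; exact hρt
  have hdom' : Stmt19Aux.Dom β := hdom
  have hfb : fBeta β ρ =
      ∑ m : (Stmt19Aux.T0 β → Fin d) × (Stmt19Aux.T0 β → Fin d),
        Stmt19Aux.g β (C.conjTranspose * C) 0 m.1 m.2 *
        Stmt19Aux.g β (C.conjTranspose * C) 1 m.1 m.2 := by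
    rw [hC, Stmt19Aux.fBeta_eq hβ hdom']
    exact (Fintype.sum_prod_type
      (fun m : (Stmt19Aux.T0 β → Fin d) × (Stmt19Aux.T0 β → Fin d) =>
        Stmt19Aux.g β (C.conjTranspose * C) 0 m.1 m.2 *
        Stmt19Aux.g β (C.conjTranspose * C) 1 m.1 m.2)).symm
  have hcs := Stmt19Aux.cs_complex
    (fun m : (Stmt19Aux.T0 β → Fin d) × (Stmt19Aux.T0 β → Fin d) =>
      Stmt19Aux.g β (C.conjTranspose * C) 0 m.1 m.2)
    (fun m : (Stmt19Aux.T0 β → Fin d) × (Stmt19Aux.T0 β → Fin d) =>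
      Stmt19Aux.g β (C.conjTranspose * C) 1 m.1 m.2)
  rw [← hfb] at hcs
  have hrow : ∀ i : Fin 2,
      (∑ m : (Stmt19Aux.T0 β → Fin d) × (Stmt19Aux.T0 β → Fin d),
        ‖Stmt19Aux.g β (C.conjTranspose * C) i m.1 m.2‖ ^ 2) ≤
      ((d : ℝ) ^ Fintype.card (Stmt19Aux.DL β i)) ^ 2 := by
    intro i
    exact le_trans (le_of_eq (Fintype.sum_prod_type
      (fun m : (Stmt19Aux.T0 β → Fin d) × (Stmt19Aux.T0 β → Fin d) =>
        ‖Stmt19Aux.g β (C.conjTranspose * C) i m.1 m.2‖ ^ 2)))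
      (Stmt19Aux.row_bound hβ hdom' C htr i)
  have hnn1 : (0:ℝ) ≤ ∑ m : (Stmt19Aux.T0 β → Fin d) × (Stmt19Aux.T0 β → Fin d),
      ‖Stmt19Aux.g β (C.conjTranspose * C) 1 m.1 m.2‖ ^ 2 :=
    Finset.sum_nonneg fun m _ => pow_nonneg (norm_nonneg _) 2
  have hnn0 : (0:ℝ) ≤ ((d : ℝ) ^ Fintype.card (Stmt19Aux.DL β 0)) ^ 2 := by positivity
  calc ‖fBeta β ρ‖ ^ 2
      ≤ (∑ m : (Stmt19Aux.T0 β → Fin d) × (Stmt19Aux.T0 β → Fin d),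
          ‖Stmt19Aux.g β (C.conjTranspose * C) 0 m.1 m.2‖ ^ 2) *
        (∑ m : (Stmt19Aux.T0 β → Fin d) × (Stmt19Aux.T0 β → Fin d),
          ‖Stmt19Aux.g β (C.conjTranspose * C) 1 m.1 m.2‖ ^ 2) := hcs
    _ ≤ ((d : ℝ) ^ Fintype.card (Stmt19Aux.DL β 0)) ^ 2 *
        ((d : ℝ) ^ Fintype.card (Stmt19Aux.DL β 1)) ^ 2 :=
        mul_le_mul (hrow 0) (hrow 1) hnn1 hnn0
    _ = (d : ℝ) ^ bigBin β := by
        rw [← pow_mul, ← pow_mul, ← pow_add, Stmt19Aux.bigBin_eq hβ hdom']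
        congr 1
        ring
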